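/- Suppose W₁ ≤ S_d is cyclic and ρ : W₁ → Kˣ is an injective one-dimensional character. Then N(Z(ρ;p₁,…,p_d) ∗ Z(1_{W₂};p₁,…,p_d) ∗ ⋯ ∗ Z(1_{W_k};p₁,…,p_d)) equals the number of S_d-orbits on I₁×⋯×I_k whose stabilizer ω₁W₁ω₁⁻¹ ∩ ⋯ ∩ ω_kW_kω_k⁻¹ is trivial. -/

import Mathlib

open scoped Classical
open MvPolynomial

/-- The number `c_s(σ)` of cycles of length `s` in the cycle decomposition of `σ`
(fixed points counted as cycles of length 1). -/
def cyc {d : ℕ} (σ : Equiv.Perm (Fin d)) (s : ℕ) : ℕ :=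
  if s = 1 then d - σ.support.card else σ.cycleType.count s

/-- The monomial `p₁^{c₁(σ)} ⋯ p_d^{c_d(σ)}`, where the variable `X s` stands for the
power sum `p_{s+1}`. -/
noncomputable def cycMon {d : ℕ} (K : Type*) [Field K] (σ : Equiv.Perm (Fin d)) :
    MvPolynomial (Fin d) K :=
  ∏ s : Fin d, (X s : MvPolynomial (Fin d) K) ^ cyc σ ((s : ℕ) + 1)

/-- The characteristic map: `ch u = |S_d|⁻¹ Σ_ζ u(ζ) p₁^{c₁(ζ)}⋯p_d^{c_d(ζ)}`. -/
noncomputable def ch {d : ℕ} (K : Type*) [Field K] (u : Equiv.Perm (Fin d) → K) :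
    MvPolynomial (Fin d) K :=
  (Nat.card (Equiv.Perm (Fin d)) : K)⁻¹ • ∑ ζ : Equiv.Perm (Fin d), u ζ • cycMon K ζ

/-- The character of the induced representation `ind_W^{S_d}(χ)`. -/
noncomputable def indChar {d : ℕ} (K : Type*) [Field K]
    (W : Subgroup (Equiv.Perm (Fin d))) (χ : W →* Kˣ) : Equiv.Perm (Fin d) → K :=
  fun ζ => (Nat.card W : K)⁻¹ * ∑ g : Equiv.Perm (Fin d),
    if h : g⁻¹ * ζ * g ∈ W then (χ ⟨g⁻¹ * ζ * g, h⟩ : K) else 0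

/-- The generalized cycle index `Z(χ; p₁,…,p_d)`; it equals `ch (indChar χ)`. -/
noncomputable def Zind {d : ℕ} (K : Type*) [Field K]
    (W : Subgroup (Equiv.Perm (Fin d))) (χ : W →* Kˣ) : MvPolynomial (Fin d) K :=
  (Nat.card W : K)⁻¹ • ∑ σ : W, (χ σ : K) • cycMon K (σ : Equiv.Perm (Fin d))

/-- `z_σ = ∏_{s=1}^d s^{c_s(σ)} c_s(σ)!`. -/
def zval {d : ℕ} (σ : Equiv.Perm (Fin d)) : ℕ :=
  ∏ s ∈ Finset.Icc 1 d, s ^ (cyc σ s) * (cyc σ s).factorial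

def IsLeftTransversal {G : Type*} [Group G] (W : Subgroup G) (I : Set G) : Prop :=
  ∀ g : G, ∃! i : I, (i : G)⁻¹ * g ∈ W

section Aux

lemma sum_hom {G : Type*} [Group G] [Fintype G] {K : Type*} [Field K] (f : G →* Kˣ) :
    (∑ g : G, (f g : K)) = if ∀ g, f g = 1 then (Nat.card G : K) else 0 := by
  split_ifs with h
  · simp [h, Nat.card_eq_fintype_card]
  · push_neg at h
    obtain ⟨b, hb⟩ := h
    have key : (f b : K) * ∑ g : G, (f g : K) = ∑ g : G, (f g : K) := by
      rw [Finset.mul_sum]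
      exact Fintype.sum_bijective (b * ·) (Group.mulLeft_bijective b)
        _ _ (fun g => by rw [map_mul]; push_cast; ring)
    have hz : ((f b : K) - 1) * ∑ g : G, (f g : K) = 0 := by
      rw [sub_mul, one_mul, key, sub_self]
    rcases mul_eq_zero.mp hz with h1 | h2
    · exact absurd (Units.ext (sub_eq_zero.mp h1)) hb
    · exact h2

lemma fix_iff {G : Type*} [Group G] {W : Subgroup G} {I : Set G}
    (hI : IsLeftTransversal W I) (sP : G →* Equiv.Perm I)
    (hs : ∀ (ζ : G) (i : I), ((sP ζ i : G))⁻¹ * ζ * i ∈ W)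
    (ζ : G) (i : I) : sP ζ i = i ↔ (i : G)⁻¹ * ζ * i ∈ W := by
  constructor
  · intro h; have := hs ζ i; rwa [h] at this
  · intro h
    obtain ⟨j, hj, hu⟩ := hI (ζ * i)
    have h1 : sP ζ i = j := hu _ (by show _ ∈ W; rw [← mul_assoc]; exact hs ζ i)
    have h2 : i = j := hu _ (by show _ ∈ W; rw [← mul_assoc]; exact h)
    rw [h1, h2]

lemma indChar_eq {d : ℕ} (K : Type*) [Field K] [CharZero K]
    {W : Subgroup (Equiv.Perm (Fin d))} (χ : W →* Kˣ) {I : Set (Equiv.Perm (Fin d))}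
    (hI : IsLeftTransversal W I) (ζ : Equiv.Perm (Fin d)) :
    indChar K W χ ζ =
      ∑ i : I, if h : (i : Equiv.Perm (Fin d))⁻¹ * ζ * (i : Equiv.Perm (Fin d)) ∈ W
        then (χ ⟨_, h⟩ : K) else 0 := by
  classical
  have hbij : Function.Bijective
      (fun p : I × W => (p.1 : Equiv.Perm (Fin d)) * (p.2 : Equiv.Perm (Fin d))) := by
    constructor
    · rintro ⟨i, w⟩ ⟨i', w'⟩ hmul
      simp only at hmul
      obtain ⟨j, hj, hu⟩ := hI ((i : Equiv.Perm (Fin d)) * w)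
      have hi : i = j := hu i (by show _ ∈ W; rw [← mul_assoc, inv_mul_cancel, one_mul]; exact w.2)
      have hi' : i' = j := hu i' (by
        show _ ∈ W; rw [hmul, ← mul_assoc, inv_mul_cancel, one_mul]; exact w'.2)
      have hii : i = i' := hi.trans hi'.symm
      refine Prod.ext hii (Subtype.ext ?_)
      have : (i : Equiv.Perm (Fin d)) = i' := congrArg _ hii
      rw [this] at hmul
      exact mul_left_cancel hmul
    · intro g
      obtain ⟨i, hi, _⟩ := hI g
      refine ⟨(i, ⟨(i : Equiv.Perm (Fin d))⁻¹ * g, hi⟩), ?_⟩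
      simp [← mul_assoc]
  have hcard : (Nat.card W : K) ≠ 0 := by
    simp [Nat.card_eq_fintype_card, Fintype.card_ne_zero]
  rw [indChar]
  rw [← Equiv.sum_comp (Equiv.ofBijective _ hbij)
    (fun g => if h : g⁻¹ * ζ * g ∈ W then (χ ⟨g⁻¹ * ζ * g, h⟩ : K) else 0)]
  rw [Fintype.sum_prod_type]
  have hterm : ∀ (i : I) (w : W),
      (if h : ((Equiv.ofBijective _ hbij) (i, w))⁻¹ * ζ * ((Equiv.ofBijective _ hbij) (i, w)) ∈ W
        then (χ ⟨_, h⟩ : K) else 0)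
      = (if h : (i : Equiv.Perm (Fin d))⁻¹ * ζ * (i : Equiv.Perm (Fin d)) ∈ W
        then (χ ⟨_, h⟩ : K) else 0) := by
    intro i w
    have hc : ((Equiv.ofBijective _ hbij) (i, w))⁻¹ * ζ * ((Equiv.ofBijective _ hbij) (i, w))
        = (w : Equiv.Perm (Fin d))⁻¹ * ((i : Equiv.Perm (Fin d))⁻¹ * ζ * i) * w := by
      show ((i : Equiv.Perm (Fin d)) * w)⁻¹ * ζ * ((i : Equiv.Perm (Fin d)) * w) = _
      group
    have hmemiff :
        ((Equiv.ofBijective _ hbij) (i, w))⁻¹ * ζ * ((Equiv.ofBijective _ hbij) (i, w)) ∈ W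
        ↔ (i : Equiv.Perm (Fin d))⁻¹ * ζ * (i : Equiv.Perm (Fin d)) ∈ W := by
      rw [hc, mul_assoc]
      rw [W.mul_mem_cancel_left (inv_mem w.2), W.mul_mem_cancel_right w.2]
    split_ifs with h1 h2 h2
    · have he : (⟨_, h1⟩ : W) = w⁻¹ * (⟨_, h2⟩ : W) * w := by
        apply Subtype.ext; push_cast; exact hc
      rw [he, map_mul, map_mul, map_inv]
      push_cast
      field_simp
    · exact absurd (hmemiff.mp h1) h2
    · exact absurd (hmemiff.mpr h2) h1
    · rfl
  calc (Nat.card W : K)⁻¹ * ∑ i : I, ∑ w : W,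
        (if h : ((Equiv.ofBijective _ hbij) (i, w))⁻¹ * ζ * ((Equiv.ofBijective _ hbij) (i, w)) ∈ W
          then (χ ⟨_, h⟩ : K) else 0)
      = (Nat.card W : K)⁻¹ * ∑ i : I, (Nat.card W : K) *
        (if h : (i : Equiv.Perm (Fin d))⁻¹ * ζ * (i : Equiv.Perm (Fin d)) ∈ W
          then (χ ⟨_, h⟩ : K) else 0) := by
        congr 1
        refine Finset.sum_congr rfl fun i _ => ?_
        rw [Finset.sum_congr rfl fun w _ => hterm i w, Finset.sum_const,
          Nat.card_eq_fintype_card, nsmul_eq_mul]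
        simp
  _ = _ := by
        rw [← Finset.mul_sum, ← mul_assoc, inv_mul_cancel₀ hcard, one_mul]

lemma heval {d : ℕ} (K : Type*) [Field K] (u : Equiv.Perm (Fin d) → K) :
    MvPolynomial.eval (fun _ => (1 : K)) (ch K u)
      = (Nat.card (Equiv.Perm (Fin d)) : K)⁻¹ * ∑ ζ : Equiv.Perm (Fin d), u ζ := by
  simp [ch, cycMon, smul_eq_C_mul, Finset.mul_sum]

end Aux


/-- if `W₁` is cyclic and `ρ : W₁ → Kˣ` is an injective one-dimensional
character, then `N(Z(ρ)∗Z(1_{W₂})∗⋯∗Z(1_{W_k}))` equals the number of `S_d`-orbits on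
`I₁×⋯×I_k` whose stabilizer `ω₁W₁ω₁⁻¹ ∩ ⋯ ∩ ω_kW_kω_k⁻¹` is trivial. -/
theorem stmt17 (d k : ℕ) (hk : 0 < k) (K : Type*) [Field K] [IsAlgClosed K] [CharZero K]
    (W : Fin k → Subgroup (Equiv.Perm (Fin d))) (χ : ∀ m, W m →* Kˣ)
    (hcyc : IsCyclic (W ⟨0, hk⟩))
    (hinj : Function.Injective (χ ⟨0, hk⟩))
    (htriv : ∀ m : Fin k, m ≠ ⟨0, hk⟩ → χ m = 1)
    (I : Fin k → Set (Equiv.Perm (Fin d))) (hI : ∀ m, IsLeftTransversal (W m) (I m))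
    (s : ∀ m, Equiv.Perm (Fin d) →* Equiv.Perm (I m))
    (hs : ∀ m (ζ : Equiv.Perm (Fin d)) (i : I m),
      ((s m ζ i : Equiv.Perm (Fin d)))⁻¹ * ζ * i ∈ W m)
    (T : Finset (∀ m, I m))
    (hT : ∀ i : ∀ m, I m, ∃! ω, ω ∈ T ∧ ∃ ζ : Equiv.Perm (Fin d), ∀ m, s m ζ (ω m) = i m) :
    MvPolynomial.eval (fun _ => (1 : K))
        (ch K (fun ζ => ∏ m, indChar K (W m) (χ m) ζ)) =
      ((T.filter (fun ω =>
        (⨅ m, (W m).map (MulAut.conj ((ω m : Equiv.Perm (Fin d)))).toMonoidHom) = ⊥)).card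
        : K) := by
  classical
  let m0 : Fin k := ⟨0, hk⟩
  let S0 : (∀ m, I m) → Subgroup (Equiv.Perm (Fin d)) :=
    fun ω => ⨅ m, (W m).map (MulAut.conj ((ω m : Equiv.Perm (Fin d)))).toMonoidHom
  have hmem : ∀ (ω : ∀ m, I m) (ζ : Equiv.Perm (Fin d)), ζ ∈ S0 ω ↔
      ∀ m, ((ω m : Equiv.Perm (Fin d)))⁻¹ * ζ * (ω m) ∈ W m := by
    intro ω ζ
    have base : ζ ∈ S0 ω ↔ ∀ m, ∃ x ∈ W m,
        (ω m : Equiv.Perm (Fin d)) * x * ((ω m : Equiv.Perm (Fin d)))⁻¹ = ζ := by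
      simp [S0, Subgroup.mem_iInf, Subgroup.mem_map]
    rw [base]
    refine forall_congr' fun m => ⟨?_, fun h => ⟨_, h, by group⟩⟩
    rintro ⟨x, hx, rfl⟩
    have hxe : ((ω m : Equiv.Perm (Fin d)))⁻¹ *
        ((ω m : Equiv.Perm (Fin d)) * x * ((ω m : Equiv.Perm (Fin d)))⁻¹) *
        (ω m : Equiv.Perm (Fin d)) = x := by group
    rw [hxe]; exact hx
  have hfix : ∀ (ω : ∀ m, I m) (ζ : Equiv.Perm (Fin d)),
      ζ ∈ S0 ω ↔ ∀ m, s m ζ (ω m) = ω m := by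
    intro ω ζ
    rw [hmem]
    exact (forall_congr' fun m => (fix_iff (hI m) (s m) (hs m) ζ (ω m))).symm
  have hstep : ∀ (ω ω' : ∀ m, I m) (ζ : Equiv.Perm (Fin d)),
      (∀ m, s m ζ (ω' m) = ω m) → S0 ω' = ⊥ → S0 ω = ⊥ := by
    intro ω ω' ζ hζ h'
    rw [Subgroup.eq_bot_iff_forall]
    intro ξ hξ
    have hmem2 : ζ⁻¹ * ξ * ζ ∈ S0 ω' := by
      rw [hfix]
      intro m
      have e1 : s m (ζ⁻¹ * ξ * ζ) (ω' m) = (s m ζ)⁻¹ ((s m ξ) ((s m ζ) (ω' m))) := by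
        simp [map_mul, map_inv, Equiv.Perm.mul_apply]
      rw [e1, hζ m, (hfix ω ξ).mp hξ m, ← hζ m, Equiv.Perm.inv_def, Equiv.symm_apply_apply]
    rw [h', Subgroup.mem_bot] at hmem2
    calc ξ = ζ * (ζ⁻¹ * ξ * ζ) * ζ⁻¹ := by group
    _ = 1 := by rw [hmem2]; group
  -- step 2: product formula
  have step2 : ∀ (ζ : Equiv.Perm (Fin d)) (ω : ∀ m, I m),
      (∏ m, if h : ((ω m : Equiv.Perm (Fin d)))⁻¹ * ζ * (ω m) ∈ W m
          then (χ m ⟨_, h⟩ : K) else 0)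
      = if h : ζ ∈ S0 ω
          then (χ m0 ⟨((ω m0 : Equiv.Perm (Fin d)))⁻¹ * ζ * (ω m0), (hmem ω ζ).mp h m0⟩ : K)
          else 0 := by
    intro ζ ω
    by_cases hin : ζ ∈ S0 ω
    · have hall := (hmem ω ζ).mp hin
      rw [dif_pos hin]
      rw [Finset.prod_congr rfl (fun m _ => dif_pos (hall m))]
      refine Finset.prod_eq_single m0 (fun m _ hm => ?_) (by simp)
      rw [htriv m hm]
      rfl
    · rw [dif_neg hin]
      rw [hmem] at hin
      push_neg at hin
      obtain ⟨m, hm⟩ := hin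
      exact Finset.prod_eq_zero (Finset.mem_univ m) (dif_neg hm)
  -- step 3: inner sum over ζ
  have step3 : ∀ ω : ∀ m, I m,
      (∑ ζ : Equiv.Perm (Fin d), if h : ζ ∈ S0 ω
          then (χ m0 ⟨((ω m0 : Equiv.Perm (Fin d)))⁻¹ * ζ * (ω m0), (hmem ω ζ).mp h m0⟩ : K)
          else 0)
      = if S0 ω = ⊥ then 1 else 0 := by
    intro ω
    set F : Equiv.Perm (Fin d) → K := fun ζ => if h : ζ ∈ S0 ω
      then (χ m0 ⟨((ω m0 : Equiv.Perm (Fin d)))⁻¹ * ζ * (ω m0), (hmem ω ζ).mp h m0⟩ : K)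
      else 0 with hF
    let g0 : (S0 ω) →* (W m0) :=
      { toFun := fun ζ => ⟨((ω m0 : Equiv.Perm (Fin d)))⁻¹ * ζ * (ω m0),
          (hmem ω ζ.1).mp ζ.2 m0⟩
        map_one' := by apply Subtype.ext; simp
        map_mul' := by intro a b; apply Subtype.ext; push_cast; group }
    let f : (S0 ω) →* Kˣ := (χ m0).comp g0
    have e0 : (∑ ζ : Equiv.Perm (Fin d), F ζ) = ∑ ζ : (S0 ω), (f ζ : K) := by
      rw [← Finset.sum_filter_of_ne (p := fun ζ => ζ ∈ S0 ω)
        (fun ζ _ hζ => by by_contra hc; exact hζ (dif_neg hc))]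
      rw [Finset.sum_subtype (p := fun ζ => ζ ∈ S0 ω) (Finset.univ.filter (fun ζ => ζ ∈ S0 ω)) (fun x => by simp) F]
      refine Finset.sum_congr rfl fun ζ _ => ?_
      show F ζ.1 = _
      rw [hF]
      simp only [dif_pos ζ.2]
      rfl
    rw [e0, sum_hom f]
    have hiff : (∀ g : S0 ω, f g = 1) ↔ S0 ω = ⊥ := by
      constructor
      · intro h
        rw [Subgroup.eq_bot_iff_forall]
        intro ξ hξ
        have h1 : χ m0 (g0 ⟨ξ, hξ⟩) = χ m0 1 := by rw [map_one]; exact h ⟨ξ, hξ⟩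
        have h2 : g0 ⟨ξ, hξ⟩ = 1 := hinj h1
        have h3 : ((ω m0 : Equiv.Perm (Fin d)))⁻¹ * ξ * (ω m0) = 1 := congrArg Subtype.val h2
        calc ξ = (ω m0 : Equiv.Perm (Fin d)) * (((ω m0 : Equiv.Perm (Fin d)))⁻¹ * ξ * (ω m0))
                * ((ω m0 : Equiv.Perm (Fin d)))⁻¹ := by group
        _ = 1 := by rw [h3]; group
      · intro hb ζ
        have h1 : ζ.1 = 1 := by
          rw [Subgroup.eq_bot_iff_forall] at hb
          exact hb _ ζ.2
        have h2 : ζ = 1 := Subtype.ext h1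
        rw [h2, map_one]
    by_cases hb : S0 ω = ⊥
    · rw [if_pos hb, if_pos (hiff.mpr hb), hb]
      simp
    · rw [if_neg hb, if_neg (fun hc => hb (hiff.mp hc))]
  -- counting
  have hcount : (Finset.univ.filter (fun ω : ∀ m, I m => S0 ω = ⊥)).card
      = (T.filter (fun ω => S0 ω = ⊥)).card * Fintype.card (Equiv.Perm (Fin d)) := by
    set rep : (∀ m, I m) → (∀ m, I m) := fun i => (hT i).choose with hrep
    have hrepT : ∀ i, rep i ∈ T := fun i => (hT i).choose_spec.1.1
    have hrepR : ∀ i, ∃ ζ : Equiv.Perm (Fin d), ∀ m, s m ζ (rep i m) = i m :=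
      fun i => (hT i).choose_spec.1.2
    have hrepU : ∀ (i ω : ∀ m, I m), ω ∈ T → (∃ ζ : Equiv.Perm (Fin d),
        ∀ m, s m ζ (ω m) = i m) → ω = rep i :=
      fun i ω h1 h2 => (hT i).choose_spec.2 ω ⟨h1, h2⟩
    have hmap : ∀ ω ∈ Finset.univ.filter (fun ω : ∀ m, I m => S0 ω = ⊥),
        rep ω ∈ T.filter (fun ω => S0 ω = ⊥) := by
      intro ω hω
      rw [Finset.mem_filter] at hω ⊢
      obtain ⟨ζ, hζ⟩ := hrepR ω
      have hinv : ∀ m, s m ζ⁻¹ (ω m) = rep ω m := by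
        intro m; rw [← hζ m]; simp [map_inv]
      exact ⟨hrepT ω, hstep _ _ ζ⁻¹ hinv hω.2⟩
    rw [Finset.card_eq_sum_card_fiberwise hmap]
    have hfib : ∀ ω' ∈ T.filter (fun ω => S0 ω = ⊥),
        ((Finset.univ.filter fun ω : ∀ m, I m => S0 ω = ⊥).filter fun ω => rep ω = ω').card
          = Fintype.card (Equiv.Perm (Fin d)) := by
      intro ω' hω'
      rw [Finset.mem_filter] at hω'
      have hEq : ((Finset.univ.filter fun ω : ∀ m, I m => S0 ω = ⊥).filter fun ω => rep ω = ω')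
          = Finset.univ.image (fun ζ : Equiv.Perm (Fin d) => fun m => s m ζ (ω' m)) := by
        ext ω
        simp only [Finset.mem_filter, Finset.mem_univ, true_and, Finset.mem_image]
        constructor
        · rintro ⟨hbot, hrepω⟩
          obtain ⟨ζ, hζ⟩ := hrepR ω
          refine ⟨ζ, funext fun m => ?_⟩
          rw [← hrepω]
          exact hζ m
        · rintro ⟨ζ, rfl⟩
          refine ⟨hstep _ ω' ζ (fun m => rfl) hω'.2, ?_⟩
          exact (hrepU _ ω' hω'.1 ⟨ζ, fun m => rfl⟩).symm
      have hinj2 : Function.Injective (fun ζ : Equiv.Perm (Fin d) => fun m => s m ζ (ω' m)) := by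
        intro ζ ξ hζξ
        have h1 : ∀ m, s m ζ (ω' m) = s m ξ (ω' m) := fun m => congrFun hζξ m
        have h2 : ξ⁻¹ * ζ ∈ S0 ω' := by
          rw [hfix]
          intro m
          have : s m (ξ⁻¹ * ζ) (ω' m) = (s m ξ)⁻¹ ((s m ζ) (ω' m)) := by
            simp [map_mul, map_inv, Equiv.Perm.mul_apply]
          rw [this, h1 m, Equiv.Perm.inv_def, Equiv.symm_apply_apply]
        rw [hω'.2, Subgroup.mem_bot] at h2
        calc ζ = ξ * (ξ⁻¹ * ζ) := by group
        _ = ξ := by rw [h2, mul_one]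
      rw [hEq, Finset.card_image_of_injective _ hinj2, Finset.card_univ]
    rw [Finset.sum_congr rfl hfib, Finset.sum_const, smul_eq_mul]
  -- assemble
  have hSd : (Nat.card (Equiv.Perm (Fin d)) : K) ≠ 0 := by
    simp [Nat.card_eq_fintype_card, Fintype.card_ne_zero]
  rw [heval]
  have e1 : ∀ ζ : Equiv.Perm (Fin d), (∏ m, indChar K (W m) (χ m) ζ)
      = ∑ ω : ∀ m, I m, if h : ζ ∈ S0 ω
          then (χ m0 ⟨((ω m0 : Equiv.Perm (Fin d)))⁻¹ * ζ * (ω m0), (hmem ω ζ).mp h m0⟩ : K)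
          else 0 := by
    intro ζ
    rw [Finset.prod_congr rfl (fun m _ => indChar_eq K (χ m) (hI m) ζ)]
    rw [Finset.prod_univ_sum]
    rw [← Fintype.piFinset_univ]
    exact Finset.sum_congr rfl fun ω _ => step2 ζ ω
  rw [Finset.sum_congr rfl (fun ζ _ => e1 ζ), Finset.sum_comm]
  rw [Finset.sum_congr rfl (fun ω _ => step3 ω)]
  rw [Finset.sum_boole]
  have hfinal : (Finset.filter (fun ω : ∀ m, I m => S0 ω = ⊥) Finset.univ).card
      = (T.filter (fun ω => S0 ω = ⊥)).card * Fintype.card (Equiv.Perm (Fin d)) := hcount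
  rw [hfinal]
  have hTf : (T.filter (fun ω => S0 ω = ⊥))
      = T.filter (fun ω => (⨅ m, (W m).map
          (MulAut.conj ((ω m : Equiv.Perm (Fin d)))).toMonoidHom) = ⊥) :=
    Finset.filter_congr (fun ω _ => Iff.rfl)
  rw [← hTf, Nat.card_eq_fintype_card] at *
  push_cast
  rw [← mul_assoc, mul_comm ((Fintype.card (Equiv.Perm (Fin d)) : K))⁻¹, mul_assoc,
    inv_mul_cancel₀ hSd, mul_one]
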